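/- Let W ∈ ℝ^{m×n} and X ∈ ℝ^{n×k}, and let α ≥ 0 be an integer. Let S be a symmetric positive semidefinite matrix with S² = (XXᵀ)^α. Then tr((W − W')(XXᵀ)^α(W − W')ᵀ) = ‖(W − W')S‖_F² for every W' ∈ ℝ^{m×n}; consequently a minimizer of the left-hand side over matrices W' of rank at most r is W' = U_r U_rᵀ W, where U_r consists of the first r left singular vectors of WS. -/

import Mathlib

open Matrix BigOperators

lemma proj_exists {m n : ℕ} (C : Matrix (Fin m) (Fin n) ℝ) :
    ∃ Q : Matrix (Fin m) (Fin m) ℝ, Qᵀ = Q ∧ Q * Q = Q ∧ Q * C = C ∧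
      Matrix.trace Q = (C.rank : ℝ) := by
  set e : EuclideanSpace ℝ (Fin m) ≃ₗ[ℝ] (Fin m → ℝ) := WithLp.linearEquiv 2 ℝ (Fin m → ℝ) with he
  set V : Submodule ℝ (EuclideanSpace ℝ (Fin m)) :=
    (LinearMap.range C.mulVecLin).comap e.toLinearMap with hV
  set f0 : EuclideanSpace ℝ (Fin m) →ₗ[ℝ] EuclideanSpace ℝ (Fin m) :=
    (V.starProjection).toLinearMap with hf0
  set f : (Fin m → ℝ) →ₗ[ℝ] (Fin m → ℝ) := e.toLinearMap ∘ₗ f0 ∘ₗ e.symm.toLinearMap with hf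
  have hmem : ∀ x, f x ∈ LinearMap.range C.mulVecLin := fun x => by
    exact V.starProjection_apply_mem (e.symm x)
  have hfix : ∀ x ∈ LinearMap.range C.mulVecLin, f x = x := fun x hx => by
    have : e.symm x ∈ V := by simpa [hV] using hx
    simp [hf, hf0, (Submodule.starProjection_eq_self_iff).mpr this]
  set Q : Matrix (Fin m) (Fin m) ℝ := LinearMap.toMatrix' f with hQ
  have hmv : ∀ v : Fin m → ℝ, Q.mulVec v = f v := fun v => by
    rw [hQ, ← Matrix.toLin'_apply, Matrix.toLin'_toMatrix']
  refine ⟨Q, ?_, ?_, ?_, ?_⟩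
  · -- symmetry
    have hsym := Submodule.starProjection_isSymmetric (𝕜 := ℝ) V
    ext i j
    have h1 : ∀ a b : Fin m, Q a b = f0 (EuclideanSpace.single b 1) a := by
      intro a b
      rw [hQ, LinearMap.toMatrix'_apply]
      have harg : e.symm (Pi.single b (1:ℝ))
          = (EuclideanSpace.single b 1 : EuclideanSpace ℝ (Fin m)) := by
        ext k; simp [he]
      rw [hf]
      simp only [LinearMap.coe_comp, Function.comp_apply, LinearEquiv.coe_coe]
      rw [harg]
      rfl
    have h2 : ∀ a b : Fin m, f0 (EuclideanSpace.single b 1) a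
        = inner ℝ (EuclideanSpace.single a (1:ℝ)) (f0 (EuclideanSpace.single b 1)) := by
      intro a b
      rw [EuclideanSpace.inner_single_left]
      simp
    rw [Matrix.transpose_apply, h1, h1, h2, h2]
    rw [hf0, ← hsym, real_inner_comm]
  · -- idempotent
    have hc : f ∘ₗ f = f := LinearMap.ext fun x => hfix _ (hmem x)
    rw [hQ, ← LinearMap.toMatrix'_comp, hc]
  · -- fixes C
    ext i j
    have hcol : (fun l => C l j) = C.mulVec (Pi.single j 1) := by
      ext l; simp [Matrix.mulVec, dotProduct, Pi.single_apply]
    calc (Q * C) i j = (Q.mulVec fun l => C l j) i := by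
          simp [Matrix.mul_apply, Matrix.mulVec, dotProduct]
      _ = C i j := by
          rw [hcol, hmv]
          have hm : C.mulVec (Pi.single j 1) ∈ LinearMap.range C.mulVecLin := ⟨Pi.single j 1, rfl⟩
          rw [hfix _ hm]
          exact (congrFun hcol i).symm
  · -- trace
    have hproj : LinearMap.IsProj (LinearMap.range C.mulVecLin : Submodule ℝ (Fin m → ℝ))
        (f : (Fin m → ℝ) →ₗ[ℝ] (Fin m → ℝ)) := ⟨hmem, hfix⟩
    have h1 : Matrix.trace Q = LinearMap.trace ℝ (Fin m → ℝ) f := by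
      rw [hQ, ← LinearMap.toMatrix_eq_toMatrix',
        ← LinearMap.trace_eq_matrix_trace ℝ (Pi.basisFun ℝ (Fin m))]
    rw [h1, hproj.trace]
    rfl

lemma abel_bound {m r : ℕ} (hr : r ≤ m) (lam t : Fin m → ℝ)
    (hmono : Antitone lam) (hpos : ∀ i, 0 ≤ lam i)
    (ht0 : ∀ i, 0 ≤ t i) (ht1 : ∀ i, t i ≤ 1) (hsum : ∑ i, t i ≤ r) :
    ∑ i, lam i * t i ≤ ∑ i : Fin r, lam (Fin.castLE hr i) := by
  set u : Fin m → ℝ := fun i => if (i : ℕ) < r then 1 else 0 with hu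
  have himg : (Finset.univ.filter (fun i : Fin m => (i : ℕ) < r))
      = Finset.univ.image (Fin.castLE hr) := by
    ext i
    simp only [Finset.mem_filter, Finset.mem_univ, true_and, Finset.mem_image]
    constructor
    · intro h
      refine ⟨⟨i, h⟩, ?_⟩
      ext; simp
    · rintro ⟨j, rfl⟩
      simpa using j.2
  have hcard : (Finset.univ.filter (fun i : Fin m => (i : ℕ) < r)).card = r := by
    rw [himg, Finset.card_image_of_injective _ (Fin.castLE_injective hr)]
    simp
  have hsumu : ∑ i, u i = (r : ℝ) := by
    have : ∑ i, u i = ((Finset.univ.filter (fun i : Fin m => (i : ℕ) < r)).card : ℝ) := by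
      rw [hu, Finset.sum_boole]
    rw [this, hcard]
  have hrhs : ∑ i : Fin r, lam (Fin.castLE hr i) = ∑ i, lam i * u i := by
    have h2 : ∑ i, lam i * u i
        = ∑ i ∈ Finset.univ.filter (fun i : Fin m => (i:ℕ) < r), lam i := by
      rw [Finset.sum_filter]
      refine Finset.sum_congr rfl fun i _ => ?_
      by_cases h : (i : ℕ) < r <;> simp [hu, h]
    rw [h2, himg, Finset.sum_image (fun a _ b _ h => Fin.castLE_injective hr h)]
  set c : ℝ := if h : r < m then lam ⟨r, h⟩ else 0 with hc
  have hc0 : 0 ≤ c := by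
    rw [hc]; split
    · exact hpos _
    · exact le_rfl
  have hkey : ∀ i, lam i * t i - lam i * u i ≤ c * (t i - u i) := by
    intro i
    by_cases h : (i : ℕ) < r
    · have hu1 : u i = 1 := by simp [hu, h]
      have hlc : c ≤ lam i := by
        rw [hc]; split
        · exact hmono (by simp [Fin.le_def]; omega)
        · exact hpos i
      rw [hu1]
      nlinarith [ht1 i]
    · have hu0 : u i = 0 := by simp [hu, h]
      have hlc : lam i ≤ c := by
        rw [hc]; split
        · exact hmono (by simp [Fin.le_def]; omega)
        · next hrm => exact absurd (i.2.trans_le (by omega)) h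
      rw [hu0]
      nlinarith [ht0 i]
  have hle := Finset.sum_le_sum (fun i (_ : i ∈ Finset.univ) => hkey i)
  have hexp : ∑ i, (lam i * t i - lam i * u i) = ∑ i, lam i * t i - ∑ i, lam i * u i :=
    Finset.sum_sub_distrib _ _
  have hexp2 : ∑ i, c * (t i - u i) = c * (∑ i, t i - (r:ℝ)) := by
    rw [← Finset.mul_sum, Finset.sum_sub_distrib, hsumu]
  have hfin : c * (∑ i, t i - (r:ℝ)) ≤ 0 :=
    mul_nonpos_of_nonneg_of_nonpos hc0 (by linarith)
  rw [hrhs]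
  rw [hexp, hexp2] at hle
  linarith

lemma trace_self_eq {m n : ℕ} (M : Matrix (Fin m) (Fin n) ℝ) :
    Matrix.trace (M * Mᵀ) = ∑ i, ∑ j, M i j ^ 2 := by
  simp [Matrix.trace, Matrix.mul_apply, Matrix.diag, sq]

lemma trace_self_nonneg {m n : ℕ} (M : Matrix (Fin m) (Fin n) ℝ) :
    0 ≤ Matrix.trace (M * Mᵀ) := by
  rw [trace_self_eq]
  exact Finset.sum_nonneg fun i _ => Finset.sum_nonneg fun j _ => sq_nonneg _

lemma diag_nonneg {m n : ℕ} (A : Matrix (Fin m) (Fin n) ℝ) (i : Fin n) :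
    0 ≤ (Aᵀ * A) i i := by
  rw [Matrix.mul_apply]
  exact Finset.sum_nonneg fun j _ => by simp [mul_self_nonneg]

lemma trace_proj_sandwich {m n : ℕ} {R : Matrix (Fin m) (Fin m) ℝ}
    (hRt : Rᵀ = R) (hR2 : R * R = R) (M : Matrix (Fin m) (Fin n) ℝ) :
    Matrix.trace ((R * M) * (R * M)ᵀ) = Matrix.trace (R * (M * Mᵀ)) := by
  rw [Matrix.transpose_mul, hRt, Matrix.mul_assoc, ← Matrix.mul_assoc M Mᵀ R,
    Matrix.trace_mul_comm, Matrix.mul_assoc, hR2, Matrix.trace_mul_comm]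

lemma trace_proj_nonneg {m n : ℕ} {R : Matrix (Fin m) (Fin m) ℝ}
    (hRt : Rᵀ = R) (hR2 : R * R = R) (M : Matrix (Fin m) (Fin n) ℝ) :
    0 ≤ Matrix.trace (R * (M * Mᵀ)) := by
  rw [← trace_proj_sandwich hRt hR2]
  exact trace_self_nonneg _

lemma trace_proj_split {m n : ℕ} {Q : Matrix (Fin m) (Fin m) ℝ}
    (hQt : Qᵀ = Q) (hQ2 : Q * Q = Q) (M : Matrix (Fin m) (Fin n) ℝ) :
    Matrix.trace (((1 - Q) * M) * ((1 - Q) * M)ᵀ)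
      = Matrix.trace (M * Mᵀ) - Matrix.trace (Q * (M * Mᵀ)) := by
  have hRt : (1 - Q)ᵀ = 1 - Q := by
    rw [Matrix.transpose_sub, Matrix.transpose_one, hQt]
  have hR2 : (1 - Q) * (1 - Q) = 1 - Q := by
    noncomm_ring [hQ2]
  rw [trace_proj_sandwich hRt hR2, Matrix.sub_mul, Matrix.one_mul, Matrix.trace_sub]

lemma sandwich_eq {m : ℕ} {R U : Matrix (Fin m) (Fin m) ℝ}
    (hRt : Rᵀ = R) (hR2 : R * R = R) : Uᵀ * R * U = (R * U)ᵀ * (R * U) := by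
  rw [Matrix.transpose_mul, hRt, Matrix.mul_assoc Uᵀ R (R * U),
    ← Matrix.mul_assoc R R U, hR2, Matrix.mul_assoc]

noncomputable def frobNorm {α β : Type*} [Fintype α] [Fintype β]
    (A : Matrix α β ℝ) : ℝ :=
  Real.sqrt (∑ i, ∑ j, (A i j) ^ 2)

/-- Let `S` be symmetric positive semidefinite with
`S² = (XXᵀ)^α`. Then `tr((W−W')(XXᵀ)^α(W−W')ᵀ) = ‖(W−W')S‖_F²` for all `W'`,
and `W' = U_r U_rᵀ W` (with `U_r` the first `r` left singular vectors of `WS`)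
minimizes the left-hand side over matrices of rank at most `r`. -/
theorem stmt10 {m n k : ℕ} (r α : ℕ) (hr : r ≤ m)
    (W : Matrix (Fin m) (Fin n) ℝ) (X : Matrix (Fin n) (Fin k) ℝ)
    (S : Matrix (Fin n) (Fin n) ℝ) (hS : S.PosSemidef)
    (hS2 : S * S = (X * Xᵀ) ^ α)
    (U : Matrix (Fin m) (Fin m) ℝ) (s : Fin m → ℝ)
    (hU : Uᵀ * U = 1)
    (hsvd : (W * S) * (W * S)ᵀ = U * Matrix.diagonal (fun i => (s i) ^ 2) * Uᵀ)
    (hmono : Antitone s) (hpos : ∀ i, 0 ≤ s i)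
    (Ur : Matrix (Fin m) (Fin r) ℝ)
    (hUr : Ur = U.submatrix id (Fin.castLE hr)) :
    (∀ W' : Matrix (Fin m) (Fin n) ℝ,
        Matrix.trace ((W - W') * (X * Xᵀ) ^ α * (W - W')ᵀ) =
          frobNorm ((W - W') * S) ^ 2) ∧
    (Ur * Urᵀ * W).rank ≤ r ∧
      ∀ W' : Matrix (Fin m) (Fin n) ℝ, W'.rank ≤ r →
        Matrix.trace ((W - Ur * Urᵀ * W) * (X * Xᵀ) ^ α * (W - Ur * Urᵀ * W)ᵀ) ≤
          Matrix.trace ((W - W') * (X * Xᵀ) ^ α * (W - W')ᵀ) := by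
  have hSt : Sᵀ = S := by
    have h := hS.1
    ext i j
    have := congrFun (congrFun h i) j
    simpa [Matrix.conjTranspose_apply] using this
  have hkey : ∀ A : Matrix (Fin m) (Fin n) ℝ,
      A * (X * Xᵀ) ^ α * Aᵀ = (A * S) * (A * S)ᵀ := by
    intro A
    rw [← hS2]
    simp only [Matrix.transpose_mul, hSt, Matrix.mul_assoc]
  refine ⟨?_, ?_, ?_⟩
  · -- Part 1
    intro W'
    rw [hkey, trace_self_eq, frobNorm, Real.sq_sqrt]
    exact Finset.sum_nonneg fun i _ => Finset.sum_nonneg fun j _ => sq_nonneg _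
  · -- Part 2
    rw [Matrix.mul_assoc]
    calc (Ur * (Urᵀ * W)).rank ≤ Ur.rank := Matrix.rank_mul_le_left _ _
      _ ≤ r := by simpa using Ur.rank_le_card_width
  · -- Part 3
    intro W' hW'
    set D : Matrix (Fin m) (Fin m) ℝ := Matrix.diagonal (fun i => s i ^ 2) with hD
    set B : Matrix (Fin m) (Fin n) ℝ := W * S with hB
    set C : Matrix (Fin m) (Fin n) ℝ := W' * S with hC
    set P : Matrix (Fin m) (Fin m) ℝ := Ur * Urᵀ with hP
    have hUUT : U * Uᵀ = 1 := mul_eq_one_comm.mp hU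
    have hUrtUr : Urᵀ * Ur = 1 := by
      have h1 : Urᵀ * Ur = (Uᵀ * U).submatrix (Fin.castLE hr) (Fin.castLE hr) := by
        ext i j
        simp [hUr, Matrix.mul_apply]
      rw [h1, hU]
      ext i j
      simp [Matrix.one_apply, (Fin.castLE_injective hr).eq_iff]
    have hPt : Pᵀ = P := by
      rw [hP, Matrix.transpose_mul, Matrix.transpose_transpose]
    have hP2 : P * P = P := by
      rw [hP, Matrix.mul_assoc, ← Matrix.mul_assoc Urᵀ Ur Urᵀ, hUrtUr, Matrix.one_mul]
    obtain ⟨Q, hQt, hQ2, hQC, hQtr⟩ := proj_exists C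
    have hrankC : C.rank ≤ r := le_trans (Matrix.rank_mul_le_left _ _) hW'
    have htrQ : Matrix.trace Q ≤ (r : ℝ) := by
      rw [hQtr]; exact_mod_cast hrankC
    set lam : Fin m → ℝ := fun i => s i ^ 2 with hlam
    have hlmono : Antitone lam := fun i j h => by
      simp only [hlam]
      exact pow_le_pow_left₀ (hpos j) (hmono h) 2
    have hlpos : ∀ i, 0 ≤ lam i := fun i => sq_nonneg _
    set Mq : Matrix (Fin m) (Fin m) ℝ := Uᵀ * Q * U with hMq
    set t : Fin m → ℝ := fun i => Mq i i with ht
    have hMqAA : Mq = (Q * U)ᵀ * (Q * U) := sandwich_eq hQt hQ2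
    have ht0 : ∀ i, 0 ≤ t i := fun i => by
      rw [ht]; dsimp only; rw [hMqAA]; exact diag_nonneg (Q * U) i
    have hNt : (1 - Q)ᵀ = 1 - Q := by
      rw [Matrix.transpose_sub, Matrix.transpose_one, hQt]
    have hN2 : (1 - Q) * (1 - Q) = 1 - Q := by noncomm_ring [hQ2]
    have ht1 : ∀ i, t i ≤ 1 := fun i => by
      have hNAA : Uᵀ * (1 - Q) * U = ((1 - Q) * U)ᵀ * ((1 - Q) * U) :=
        sandwich_eq hNt hN2
      have hNeq : Uᵀ * (1 - Q) * U = 1 - Mq := by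
        rw [Matrix.mul_sub, Matrix.mul_one, Matrix.sub_mul, hU, hMq]
      have h0 := diag_nonneg ((1 - Q) * U) i
      rw [← hNAA, hNeq] at h0
      have h1 : (1 - Mq) i i = 1 - Mq i i := by
        simp [Matrix.sub_apply, Matrix.one_apply]
      rw [h1] at h0
      rw [ht]; dsimp only; linarith
    have hsumt : ∑ i, t i ≤ (r : ℝ) := by
      have h1 : ∑ i, t i = Matrix.trace Mq := by
        simp [Matrix.trace, Matrix.diag, ht]
      have h2 : Matrix.trace Mq = Matrix.trace Q := by
        rw [hMq, Matrix.mul_assoc, Matrix.trace_mul_comm, Matrix.mul_assoc, hUUT,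
          Matrix.mul_one]
      rw [h1, h2]; exact htrQ
    -- trace of Q * (B * Bᵀ)
    have htq : Matrix.trace (Q * (B * Bᵀ)) = ∑ i, lam i * t i := by
      rw [hB, hsvd]
      have e : Q * (U * D * Uᵀ) = (Q * (U * D)) * Uᵀ := (Matrix.mul_assoc _ _ _).symm
      rw [e, Matrix.trace_mul_comm]
      have e2 : Uᵀ * (Q * (U * D)) = Mq * D := by
        rw [hMq, ← Matrix.mul_assoc, Matrix.mul_assoc (Uᵀ * Q) U D, ← Matrix.mul_assoc]
      rw [e2, hD]
      simp [Matrix.trace, Matrix.diag, Matrix.mul_diagonal, ht, hlam, mul_comm]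
    -- trace of P * (B * Bᵀ)
    have hJ : Urᵀ * U = (1 : Matrix (Fin m) (Fin m) ℝ).submatrix (Fin.castLE hr) id := by
      have h1 : Urᵀ * U = (Uᵀ * U).submatrix (Fin.castLE hr) id := by
        ext i j; simp [hUr, Matrix.mul_apply]
      rw [h1, hU]
    have hK : Uᵀ * Ur = (1 : Matrix (Fin m) (Fin m) ℝ).submatrix id (Fin.castLE hr) := by
      have h1 : Uᵀ * Ur = (Uᵀ * U).submatrix id (Fin.castLE hr) := by
        ext i j; simp [hUr, Matrix.mul_apply]
      rw [h1, hU]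
    have htp : Matrix.trace (P * (B * Bᵀ)) = ∑ i : Fin r, lam (Fin.castLE hr i) := by
      rw [hB, hsvd, hP]
      have e : Ur * Urᵀ * (U * D * Uᵀ) = Ur * (Urᵀ * (U * D * Uᵀ)) := Matrix.mul_assoc _ _ _
      rw [e, Matrix.trace_mul_comm]
      have e2 : Urᵀ * (U * D * Uᵀ) * Ur = ((Urᵀ * U) * D) * (Uᵀ * Ur) := by
        rw [← Matrix.mul_assoc, ← Matrix.mul_assoc, Matrix.mul_assoc]
      rw [e2, hJ, hK]
      have e3 : ((1 : Matrix (Fin m) (Fin m) ℝ).submatrix (Fin.castLE hr) id * D)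
          * (1 : Matrix (Fin m) (Fin m) ℝ).submatrix id (Fin.castLE hr)
          = D.submatrix (Fin.castLE hr) (Fin.castLE hr) := by
        ext i j
        simp [Matrix.mul_apply, Matrix.one_apply]
      rw [e3, hD]
      simp [Matrix.trace, Matrix.diag, hlam]
    have hcomp : Matrix.trace (Q * (B * Bᵀ)) ≤ Matrix.trace (P * (B * Bᵀ)) := by
      rw [htq, htp]
      exact abel_bound hr lam t hlmono hlpos ht0 ht1 hsumt
    -- final chain
    rw [hkey, hkey]
    have eL : (W - Ur * Urᵀ * W) * S = (1 - P) * B := by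
      rw [hB, hP, Matrix.sub_mul, Matrix.sub_mul, Matrix.one_mul,
        Matrix.mul_assoc Ur Urᵀ (W * S)]
      rw [Matrix.mul_assoc Ur Urᵀ W, Matrix.mul_assoc Ur (Urᵀ * W) S,
        Matrix.mul_assoc Urᵀ W S]
    have eR : (W - W') * S = B - C := by
      rw [hB, hC, Matrix.sub_mul]
    rw [eL, eR]
    have h1 := trace_proj_split hPt hP2 B
    have h2 := trace_proj_split hQt hQ2 (B - C)
    have h3 := trace_proj_split hQt hQ2 B
    have h4 := trace_proj_nonneg hQt hQ2 (B - C)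
    have e5 : (1 - Q) * (B - C) = (1 - Q) * B := by
      rw [Matrix.mul_sub]
      have : (1 - Q) * C = 0 := by
        rw [Matrix.sub_mul, Matrix.one_mul, hQC, sub_self]
      rw [this, sub_zero]
    rw [e5] at h2
    linarith
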